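/- For a real number x with 0 ≤ x < 1 and a nonnegative integer k, the sum Σ_{n=k}^∞ n·n!·xⁿ/((n−k)!)² equals e^x · x^k · Σ_{i=0}^{k} (k!/i!)·[ C(k+1,i+1)·x^{i+1} + k·C(k,i)·x^i ]. -/

import Mathlib

open Finset

-- shifted exponential series lemma
lemma expShift (x : ℝ) (j k : ℕ) :
    Summable (fun n : ℕ => (Nat.choose n j : ℝ) * x ^ (n + k) / n.factorial) ∧
    ∑' n : ℕ, (Nat.choose n j : ℝ) * x ^ (n + k) / n.factorial
      = Real.exp x * x ^ (j + k) / j.factorial := by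
  set f : ℕ → ℝ := fun n => (Nat.choose n j : ℝ) * x ^ (n + k) / n.factorial with hf
  have hshift : ∀ m : ℕ, f (m + j) = (x ^ (j + k) / j.factorial) * (x ^ m / m.factorial) := by
    intro m
    have h1 : ((m + j).factorial : ℝ) = (Nat.choose (m + j) j : ℝ) * m.factorial * j.factorial := by
      rw [← Nat.add_choose_mul_factorial_mul_factorial m j]; push_cast; ring
    have hc : (0:ℝ) < (Nat.choose (m + j) j : ℝ) := by
      exact_mod_cast Nat.choose_pos (Nat.le_add_left j m)
    simp only [hf, h1]
    rw [pow_add, pow_add]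
    field_simp
    ring
  have hsum_shift : Summable (fun m : ℕ => f (m + j)) := by
    simp only [hshift]
    exact (Real.summable_pow_div_factorial x).mul_left _
  have hsum : Summable f := (summable_nat_add_iff j).mp hsum_shift
  refine ⟨hsum, ?_⟩
  have h0 : ∑ i ∈ range j, f i = 0 := by
    apply Finset.sum_eq_zero
    intro i hi
    simp only [hf, Nat.choose_eq_zero_of_lt (mem_range.mp hi)]
    simp
  have := Summable.sum_add_tsum_nat_add j hsum
  rw [h0, zero_add] at this
  rw [← this]
  simp only [hshift]
  rw [tsum_mul_left]
  have hexp : ∑' m : ℕ, x ^ m / (m.factorial : ℝ) = Real.exp x := by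
    rw [Real.exp_eq_exp_ℝ, NormedSpace.exp_eq_tsum_div]
  rw [hexp]; ring

lemma vdm1 (n k : ℕ) :
    Nat.choose (n + k) k = ∑ i ∈ range (k + 1), Nat.choose k i * Nat.choose n i := by
  rw [Nat.add_choose_eq, Finset.Nat.sum_antidiagonal_eq_sum_range_succ_mk]
  apply Finset.sum_congr rfl
  intro i hi
  have hik : i ≤ k := Nat.lt_succ_iff.mp (mem_range.mp hi)
  rw [Nat.choose_symm hik, mul_comm]

lemma vdm2 (n k : ℕ) :
    Nat.choose (n + k) (k + 1) = ∑ i ∈ range (k + 1), Nat.choose k i * Nat.choose n (i + 1) := by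
  rw [Nat.add_choose_eq, Finset.Nat.sum_antidiagonal_eq_sum_range_succ_mk]
  rw [Finset.sum_range_succ']
  simp only [Nat.choose_zero_right, one_mul, Nat.add_sub_cancel_left]
  have h0 : Nat.choose k (k + 1 - 0) = 0 := by
    simp [Nat.choose_eq_zero_of_lt]
  rw [h0, add_zero]
  apply Finset.sum_congr rfl
  intro i hi
  have hik : i ≤ k := Nat.lt_succ_iff.mp (mem_range.mp hi)
  have : k + 1 - (i + 1) = k - i := by omega
  rw [this, Nat.choose_symm hik, mul_comm]

lemma natkey (n k : ℕ) :
    (n + k) * Nat.choose (n + k) k =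
      ∑ i ∈ range (k + 1),
        ((k + 1) * Nat.choose k i * Nat.choose n (i + 1) + k * Nat.choose k i * Nat.choose n i) := by
  rw [Finset.sum_add_distrib]
  have h1 : ∑ i ∈ range (k + 1), (k + 1) * Nat.choose k i * Nat.choose n (i + 1)
      = (k + 1) * Nat.choose (n + k) (k + 1) := by
    rw [vdm2, Finset.mul_sum]; apply Finset.sum_congr rfl; intros; ring
  have h2 : ∑ i ∈ range (k + 1), k * Nat.choose k i * Nat.choose n i
      = k * Nat.choose (n + k) k := by
    rw [vdm1, Finset.mul_sum]; apply Finset.sum_congr rfl; intros; ring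
  rw [h1, h2]
  have h3 : Nat.choose (n + k) (k + 1) * (k + 1) = Nat.choose (n + k) k * n := by
    rw [Nat.choose_succ_right_eq, Nat.add_sub_cancel]
  calc (n + k) * Nat.choose (n + k) k
      = Nat.choose (n + k) k * n + k * Nat.choose (n + k) k := by ring
    _ = (k + 1) * Nat.choose (n + k) (k + 1) + k * Nat.choose (n + k) k := by
        rw [← h3]; ring

theorem stmt_2 (x : ℝ) (hx0 : 0 ≤ x) (hx1 : x < 1) (k : ℕ) :
    ∑' n : ℕ, ((n + k : ℕ) : ℝ) * ((n + k).factorial : ℝ) * x ^ (n + k) /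
      ((n.factorial : ℝ)) ^ 2 =
    Real.exp x * x ^ k * ∑ i ∈ Finset.range (k + 1),
      ((k.factorial : ℝ) / (i.factorial : ℝ)) *
        ((Nat.choose (k + 1) (i + 1) : ℝ) * x ^ (i + 1) + (k : ℝ) * (Nat.choose k i : ℝ) * x ^ i) := by
  -- auxiliary real functions
  set g : ℕ → ℕ → ℝ := fun i n =>
    ((k.factorial * (k + 1) * Nat.choose k i : ℕ) : ℝ) *
        ((Nat.choose n (i + 1) : ℝ) * x ^ (n + k) / n.factorial)
      + ((k.factorial * k * Nat.choose k i : ℕ) : ℝ) *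
        ((Nat.choose n i : ℝ) * x ^ (n + k) / n.factorial) with hg
  have hgsummable : ∀ i : ℕ, Summable (g i) := by
    intro i
    exact ((expShift x (i + 1) k).1.mul_left _).add ((expShift x i k).1.mul_left _)
  have key : ∀ n : ℕ,
      ((n + k : ℕ) : ℝ) * ((n + k).factorial : ℝ) * x ^ (n + k) / ((n.factorial : ℝ)) ^ 2
        = ∑ i ∈ range (k + 1), g i n := by
    intro n
    have hfac : ((n + k).factorial : ℝ)
        = (Nat.choose (n + k) k : ℝ) * n.factorial * k.factorial := by
      rw [← Nat.add_choose_mul_factorial_mul_factorial n k]; push_cast; ring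
    have hn : ((n.factorial : ℝ)) ≠ 0 := by
      exact_mod_cast (Nat.factorial_pos n).ne'
    have hnat : ((n + k) * Nat.choose (n + k) k : ℕ)
        = ∑ i ∈ range (k + 1),
            ((k + 1) * Nat.choose k i * Nat.choose n (i + 1)
              + k * Nat.choose k i * Nat.choose n i) := natkey n k
    have hcast : (((n + k) * Nat.choose (n + k) k : ℕ) : ℝ)
        = ∑ i ∈ range (k + 1),
            (((k + 1) * Nat.choose k i * Nat.choose n (i + 1)
              + k * Nat.choose k i * Nat.choose n i : ℕ) : ℝ) := by
      rw [hnat]; push_cast; ring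
    have lhs_eq : ((n + k : ℕ) : ℝ) * ((n + k).factorial : ℝ) * x ^ (n + k) / ((n.factorial : ℝ)) ^ 2
        = (((n + k) * Nat.choose (n + k) k : ℕ) : ℝ) * (k.factorial : ℝ) * (x ^ (n + k) / n.factorial) := by
      rw [hfac]; push_cast; field_simp
    rw [lhs_eq, hcast, Finset.sum_mul, Finset.sum_mul]
    apply Finset.sum_congr rfl
    intro i _
    simp only [hg]
    push_cast
    ring
  calc ∑' n : ℕ, ((n + k : ℕ) : ℝ) * ((n + k).factorial : ℝ) * x ^ (n + k) / ((n.factorial : ℝ)) ^ 2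
      = ∑' n : ℕ, ∑ i ∈ range (k + 1), g i n := by
        exact tsum_congr key
    _ = ∑ i ∈ range (k + 1), ∑' n : ℕ, g i n := by
        exact Summable.tsum_finsetSum (fun i _ => hgsummable i)
    _ = Real.exp x * x ^ k * ∑ i ∈ Finset.range (k + 1),
          ((k.factorial : ℝ) / (i.factorial : ℝ)) *
            ((Nat.choose (k + 1) (i + 1) : ℝ) * x ^ (i + 1)
              + (k : ℝ) * (Nat.choose k i : ℝ) * x ^ i) := by
        rw [Finset.mul_sum]
        apply Finset.sum_congr rfl
        intro i _
        have h1 := (expShift x (i + 1) k).2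
        have h2 := (expShift x i k).2
        simp only [hg]
        rw [Summable.tsum_add ((expShift x (i + 1) k).1.mul_left _) ((expShift x i k).1.mul_left _),
          tsum_mul_left, tsum_mul_left, h1, h2]
        have hchoose : (k + 1) * Nat.choose k i = Nat.choose (k + 1) (i + 1) * (i + 1) :=
          Nat.add_one_mul_choose_eq k i
        have hi : ((i.factorial : ℝ)) ≠ 0 := by exact_mod_cast (Nat.factorial_pos i).ne'
        have hi1 : (((i + 1).factorial : ℝ)) ≠ 0 := by exact_mod_cast (Nat.factorial_pos (i+1)).ne'
        have hfact1 : (((i + 1).factorial : ℝ)) = ((i : ℝ) + 1) * i.factorial := by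
          rw [Nat.factorial_succ]; push_cast; ring
        have hA : k.factorial * (k + 1) * Nat.choose k i
            = k.factorial * Nat.choose (k + 1) (i + 1) * (i + 1) := by
          rw [mul_assoc, hchoose]; ring
        have e1 : ((k.factorial * (k + 1) * Nat.choose k i : ℕ) : ℝ) / (((i + 1).factorial : ℝ))
            = (k.factorial : ℝ) * (Nat.choose (k + 1) (i + 1) : ℝ) / (i.factorial : ℝ) := by
          rw [hA, hfact1]; push_cast
          have hip : ((i : ℝ) + 1) ≠ 0 := by positivity
          field_simp
        calc ((k.factorial * (k + 1) * Nat.choose k i : ℕ) : ℝ) *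
              (Real.exp x * x ^ (i + 1 + k) / ((i + 1).factorial : ℝ))
            + ((k.factorial * k * Nat.choose k i : ℕ) : ℝ) *
              (Real.exp x * x ^ (i + k) / (i.factorial : ℝ))
            = ((k.factorial * (k + 1) * Nat.choose k i : ℕ) : ℝ) / (((i + 1).factorial : ℝ))
                * (Real.exp x * x ^ (i + 1 + k))
              + ((k.factorial * k * Nat.choose k i : ℕ) : ℝ) *
                (Real.exp x * x ^ (i + k) / (i.factorial : ℝ)) := by ring
          _ = (k.factorial : ℝ) * (Nat.choose (k + 1) (i + 1) : ℝ) / (i.factorial : ℝ)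
                * (Real.exp x * x ^ (i + 1 + k))
              + ((k.factorial * k * Nat.choose k i : ℕ) : ℝ) *
                (Real.exp x * x ^ (i + k) / (i.factorial : ℝ)) := by rw [e1]
          _ = Real.exp x * x ^ k *
              (((k.factorial : ℝ) / (i.factorial : ℝ)) *
                ((Nat.choose (k + 1) (i + 1) : ℝ) * x ^ (i + 1)
                  + (k : ℝ) * (Nat.choose k i : ℝ) * x ^ i)) := by
            push_cast
            rw [show i + 1 + k = (i + 1) + k from rfl, pow_add, pow_add]
            field_simp
            ring
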